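/- For n = 3 players, there exists a cake instance where every envy-free complete connected division has egalitarian welfare at most 1/3 + ε, while some envy-free partial connected division has egalitarian welfare 1/2 - ε; hence the egalitarian dumping paradox for 3 players can be made arbitrarily close to 3/2. -/

import Mathlib

open MeasureTheory Set
open scoped ENNReal

/-- A connected division of the cake `[0,1]` among `n` players: each player gets an
open interval, the intervals are pairwise disjoint and contained in `[0,1]`. -/
structure ConnDiv (n : ℕ) where
  pieces : Fin n → Set ℝ
  isInterval : ∀ i, ∃ a b : ℝ, pieces i = Set.Ioo a b
  subset : ∀ i, pieces i ⊆ Set.Icc (0:ℝ) 1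
  disj : Pairwise fun i j => Disjoint (pieces i) (pieces j)

/-- A connected division is complete if the closures of the pieces cover `[0,1]`. -/
def ConnDiv.Complete {n : ℕ} (d : ConnDiv n) : Prop :=
  Set.Icc (0:ℝ) 1 ⊆ ⋃ i, closure (d.pieces i)

/-- Envy-freeness: every player weakly prefers her own piece. -/
def EnvyFree {n : ℕ} (v : Fin n → Measure ℝ) (d : ConnDiv n) : Prop :=
  ∀ i j, v i (d.pieces j) ≤ v i (d.pieces i)

/-- Utilitarian welfare: sum of own-piece values. -/
noncomputable def util {n : ℕ} (v : Fin n → Measure ℝ) (d : ConnDiv n) : ℝ≥0∞ :=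
  ∑ i, v i (d.pieces i)

/-- Egalitarian welfare: minimum own-piece value. -/
noncomputable def egal {n : ℕ} (v : Fin n → Measure ℝ) (d : ConnDiv n) : ℝ≥0∞ :=
  ⨅ i, v i (d.pieces i)

/-- The uniform measure of total mass `m` on the interval `(a,b)`. -/
noncomputable def unifOn (a b m : ℝ) : Measure ℝ :=
  ENNReal.ofReal (m / (b - a)) • volume.restrict (Set.Ioo a b)

/-- Player 1's measure: value `1/2 - ε` uniformly on `(0,ε)`, value `3ε`
uniformly on `(2/3, 2/3+3ε)`, value `1/2 - 2ε` uniformly on `(1-ε, 1)`. -/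
noncomputable def w1 (ε : ℝ) : Measure ℝ :=
  unifOn 0 ε (1/2 - ε) + unifOn (2/3) (2/3 + 3*ε) (3*ε) + unifOn (1-ε) 1 (1/2 - 2*ε)

/-- The uniform (Lebesgue) measure on `[0,1]`. -/
noncomputable def wU : Measure ℝ := volume.restrict (Set.Icc (0:ℝ) 1)

noncomputable def vEg3 (ε : ℝ) : Fin 3 → Measure ℝ := ![w1 ε, wU, wU]

section AuxDumping

lemma unifOn_apply (a b m : ℝ) (S : Set ℝ) :
    unifOn a b m S = ENNReal.ofReal (m / (b-a)) * volume (S ∩ Set.Ioo a b) := by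
  simp [unifOn, Measure.smul_apply, Measure.restrict_apply' measurableSet_Ioo, smul_eq_mul]

lemma unifOn_zero {a b : ℝ} (m : ℝ) {S : Set ℝ} (h : S ∩ Set.Ioo a b = ∅) :
    unifOn a b m S = 0 := by
  rw [unifOn_apply, h, measure_empty, mul_zero]

lemma unifOn_full {a b m : ℝ} {S : Set ℝ} (hab : a < b) (hm : 0 ≤ m)
    (h : Set.Ioo a b ⊆ S) : unifOn a b m S = ENNReal.ofReal m := by
  rw [unifOn_apply, Set.inter_eq_self_of_subset_right h, Real.volume_Ioo,
    ← ENNReal.ofReal_mul (div_nonneg hm (by linarith)), div_mul_cancel₀]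
  linarith

lemma unifOn_le_mass {a b m : ℝ} (S : Set ℝ) (hab : a < b) (hm : 0 ≤ m) :
    unifOn a b m S ≤ ENNReal.ofReal m := by
  rw [unifOn_apply]
  calc ENNReal.ofReal (m / (b-a)) * volume (S ∩ Set.Ioo a b)
      ≤ ENNReal.ofReal (m / (b-a)) * volume (Set.Ioo a b) := by
        gcongr; exact Set.inter_subset_right
    _ = ENNReal.ofReal m := by
        rw [Real.volume_Ioo, ← ENNReal.ofReal_mul (div_nonneg hm (by linarith)),
          div_mul_cancel₀]
        linarith


lemma w1_apply (ε : ℝ) (S : Set ℝ) :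
    w1 ε S = unifOn 0 ε (1/2 - ε) S + unifOn (2/3) (2/3 + 3*ε) (3*ε) S
      + unifOn (1-ε) 1 (1/2 - 2*ε) S := by
  simp [w1]

lemma Ioo_inter_empty {a b c d : ℝ} (h : b ≤ c) : Set.Ioo a b ∩ Set.Ioo c d = ∅ := by
  ext x; simp only [Set.mem_inter_iff, Set.mem_Ioo, Set.mem_empty_iff_false, iff_false]
  rintro ⟨⟨_, h1⟩, h2, _⟩; linarith

lemma Ioo_inter_empty' {a b c d : ℝ} (h : d ≤ a) : Set.Ioo a b ∩ Set.Ioo c d = ∅ := by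
  rw [Set.inter_comm]; exact Ioo_inter_empty h

-- A is an interval with right end ≤ 2/3
lemma w1_le_left {ε a0 b0 : ℝ} (hε : 0 < ε) (hε' : ε < 1/20) (hb : b0 ≤ 2/3) :
    w1 ε (Set.Ioo a0 b0) ≤ ENNReal.ofReal (1/2 - ε) := by
  rw [w1_apply, unifOn_zero (a := 2/3) _ (Ioo_inter_empty (by linarith)),
    unifOn_zero (a := 1-ε) _ (Ioo_inter_empty (by linarith)), add_zero, add_zero]
  exact unifOn_le_mass _ hε (by linarith)

-- L contains (0, ε)
lemma w1_ge_leftpiece {ε aL bL : ℝ} (hε : 0 < ε) (hε' : ε < 1/20)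
    (ha : aL ≤ 0) (hb : ε ≤ bL) :
    ENNReal.ofReal (1/2 - ε) ≤ w1 ε (Set.Ioo aL bL) := by
  rw [w1_apply, unifOn_full hε (by linarith) (Set.Ioo_subset_Ioo ha hb)]
  exact le_add_right (le_add_right le_rfl)

-- R contains (2/3, 1)
lemma w1_ge_right {ε aR bR : ℝ} (hε : 0 < ε) (hε' : ε < 1/20)
    (ha : aR ≤ 2/3) (hb : 1 ≤ bR) :
    ENNReal.ofReal (1/2 + ε) ≤ w1 ε (Set.Ioo aR bR) := by
  rw [w1_apply,
    unifOn_full (by linarith) (by linarith) (Set.Ioo_subset_Ioo ha (by linarith)),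
    unifOn_full (by linarith) (by linarith) (Set.Ioo_subset_Ioo (by linarith) hb)]
  calc ENNReal.ofReal (1/2 + ε)
      = ENNReal.ofReal (3*ε) + ENNReal.ofReal (1/2 - 2*ε) := by
        rw [← ENNReal.ofReal_add (by linarith) (by linarith)]; ring_nf
    _ ≤ _ := by rw [add_assoc]; exact le_add_self

-- A is right of 2/3 + 2ε
lemma w1_lt_rightpiece {ε a0 b0 : ℝ} (hε : 0 < ε) (hε' : ε < 1/20)
    (ha : 2/3 + 2*ε < a0) :
    w1 ε (Set.Ioo a0 b0) < ENNReal.ofReal (1/2 - ε) := by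
  rw [w1_apply, unifOn_zero _ (Ioo_inter_empty' (by linarith)), zero_add]
  have hmid : unifOn (2/3) (2/3 + 3*ε) (3*ε) (Set.Ioo a0 b0)
      ≤ ENNReal.ofReal (2/3 + 3*ε - a0) := by
    rw [unifOn_apply]
    have h1 : (3*ε) / (2/3 + 3*ε - 2/3) = 1 := by field_simp; ring
    rw [h1, ENNReal.ofReal_one, one_mul]
    calc volume (Set.Ioo a0 b0 ∩ Set.Ioo (2/3) (2/3+3*ε))
        ≤ volume (Set.Ioo a0 (2/3+3*ε)) := by
          apply measure_mono; rintro x ⟨⟨hx1, _⟩, _, hx2⟩; exact ⟨hx1, hx2⟩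
      _ = ENNReal.ofReal (2/3 + 3*ε - a0) := Real.volume_Ioo
  have hend := unifOn_le_mass (a := 1-ε) (b := 1) (m := 1/2 - 2*ε)
    (Set.Ioo a0 b0) (by linarith) (by linarith)
  calc unifOn (2/3) (2/3+3*ε) (3*ε) (Set.Ioo a0 b0) + unifOn (1-ε) 1 (1/2-2*ε) (Set.Ioo a0 b0)
      ≤ ENNReal.ofReal (2/3 + 3*ε - a0) + ENNReal.ofReal (1/2 - 2*ε) := add_le_add hmid hend
    _ < ENNReal.ofReal (1/2 - ε) := by
        rcases le_or_gt (2/3 + 3*ε - a0) 0 with h | h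
        · rw [ENNReal.ofReal_eq_zero.2 h, zero_add]
          exact ENNReal.ofReal_lt_ofReal_iff (by linarith) |>.2 (by linarith)
        · rw [← ENNReal.ofReal_add (by linarith) (by linarith)]
          exact ENNReal.ofReal_lt_ofReal_iff (by linarith) |>.2 (by linarith)

lemma w1_univ (ε : ℝ) (hε : 0 < ε) (hε' : ε < 1/20) :
    w1 ε Set.univ = ENNReal.ofReal 1 := by
  rw [w1_apply, unifOn_full hε (by linarith) (Set.subset_univ _),
    unifOn_full (by linarith) (by linarith) (Set.subset_univ _),
    unifOn_full (by linarith) (by linarith) (Set.subset_univ _),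
    ← ENNReal.ofReal_add (by linarith) (by linarith),
    ← ENNReal.ofReal_add (by linarith) (by linarith)]
  ring_nf


lemma disjoint_Ioo_of_le {a b c d : ℝ} (h : b ≤ c) :
    Disjoint (Set.Ioo a b) (Set.Ioo c d) :=
  Set.disjoint_iff_inter_eq_empty.2 (Ioo_inter_empty h)

lemma main_contra {ε a0 b0 aL bL aR bR : ℝ} (hε : 0 < ε) (hε' : ε < 1/20)
    (h0 : a0 < b0)
    (ha0 : 0 ≤ a0) (hb0 : b0 ≤ 1) (haL : 0 ≤ aL) (hbL : bL ≤ 1)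
    (haR : 0 ≤ aR) (hbR : bR ≤ 1)
    (hL : 1/3 + ε < bL - aL) (hR : 1/3 + ε < bR - aR)
    (hLR : bL ≤ aR)
    (hd0L : b0 ≤ aL ∨ bL ≤ a0) (hd0R : b0 ≤ aR ∨ bR ≤ a0)
    (hzero : a0 ≤ 0 ∨ aL ≤ 0 ∨ aR ≤ 0) (hone : 1 ≤ b0 ∨ 1 ≤ bL ∨ 1 ≤ bR)
    (hefL : w1 ε (Set.Ioo aL bL) ≤ w1 ε (Set.Ioo a0 b0))
    (hefR : w1 ε (Set.Ioo aR bR) ≤ w1 ε (Set.Ioo a0 b0))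
    (hA : ENNReal.ofReal (1/3 + ε) < w1 ε (Set.Ioo a0 b0)) : False := by
  rcases hd0L with h0L | h0L
  · rcases hd0R with h0R | h0R
    · -- A leftmost: A, L, R
      have hbR1 : 1 ≤ bR := by
        rcases hone with h | h | h
        · linarith
        · linarith
        · exact h
      -- aR < 2/3 - ε ≤ 2/3 ; b0 ≤ 2/3
      have haR2 : aR ≤ 2/3 := by linarith
      have hb02 : b0 ≤ 2/3 := by linarith
      have h1 := w1_le_left (a0 := a0) hε hε' hb02
      have h2 := w1_ge_right hε hε' haR2 hbR1
      have : ENNReal.ofReal (1/2 + ε) ≤ ENNReal.ofReal (1/2 - ε) :=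
        h2.trans (hefR.trans h1)
      rw [ENNReal.ofReal_le_ofReal_iff (by linarith)] at this
      linarith
    · -- b0 ≤ aL and bR ≤ a0 : R left of A left of L, but L left of R
      linarith
  · rcases hd0R with h0R | h0R
    · -- A middle: L, A, R
      have haL0 : aL ≤ 0 := by
        rcases hzero with h | h | h
        · linarith
        · exact h
        · linarith
      have hbR1 : 1 ≤ bR := by
        rcases hone with h | h | h
        · linarith
        · linarith
        · exact h
      have h1 := w1_ge_leftpiece hε hε' haL0 (by linarith : ε ≤ bL)
      have h2 := w1_ge_right hε hε' (by linarith : aR ≤ 2/3) hbR1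
      -- additivity
      have hsum : w1 ε (Set.Ioo aL bL) + w1 ε (Set.Ioo a0 b0) + w1 ε (Set.Ioo aR bR)
          ≤ ENNReal.ofReal 1 := by
        rw [← w1_univ ε hε hε']
        have e1 : w1 ε (Set.Ioo aL bL) + w1 ε (Set.Ioo a0 b0)
            = w1 ε (Set.Ioo aL bL ∪ Set.Ioo a0 b0) :=
          (measure_union (disjoint_Ioo_of_le h0L) measurableSet_Ioo).symm
        have e2 : w1 ε (Set.Ioo aL bL ∪ Set.Ioo a0 b0) + w1 ε (Set.Ioo aR bR)
            = w1 ε ((Set.Ioo aL bL ∪ Set.Ioo a0 b0) ∪ Set.Ioo aR bR) := by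
          refine (measure_union ?_ measurableSet_Ioo).symm
          exact Set.disjoint_union_left.2
            ⟨disjoint_Ioo_of_le hLR, disjoint_Ioo_of_le h0R⟩
        rw [e1, e2]
        exact measure_mono (Set.subset_univ _)
      have : ENNReal.ofReal (1/2 - ε) + ENNReal.ofReal (1/3 + ε)
          + ENNReal.ofReal (1/2 + ε) ≤ ENNReal.ofReal 1 :=
        le_trans (add_le_add (add_le_add h1 hA.le) h2) hsum
      rw [← ENNReal.ofReal_add (by linarith) (by linarith),
        ← ENNReal.ofReal_add (by linarith) (by linarith),
        ENNReal.ofReal_le_ofReal_iff (by norm_num)] at this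
      linarith
    · -- A rightmost: L, R, A
      have haL0 : aL ≤ 0 := by
        rcases hzero with h | h | h
        · linarith
        · exact h
        · linarith
      have ha02 : 2/3 + 2*ε < a0 := by linarith
      have h1 := w1_ge_leftpiece hε hε' haL0 (by linarith : ε ≤ bL)
      have h2 := w1_lt_rightpiece (b0 := b0) hε hε' ha02
      exact absurd (h1.trans hefL) (not_le.2 h2)


lemma wU_Ioo {a b : ℝ} (h0 : 0 ≤ a) (h1 : b ≤ 1) :
    wU (Set.Ioo a b) = ENNReal.ofReal (b - a) := by
  have hsub : Set.Ioo a b ⊆ Set.Icc (0:ℝ) 1 := fun x hx =>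
    ⟨by linarith [hx.1], by linarith [hx.2]⟩
  rw [wU, Measure.restrict_apply' measurableSet_Icc,
    Set.inter_eq_self_of_subset_left hsub, Real.volume_Ioo]

lemma Ioo_bounds {a b : ℝ} (h : a < b) (hs : Set.Ioo a b ⊆ Set.Icc 0 1) :
    0 ≤ a ∧ b ≤ 1 := by
  constructor
  · by_contra hlt
    push_neg at hlt
    have h1 : a < min b 0 := lt_min h hlt
    have i3 := min_le_left b 0
    have i4 := min_le_right b 0
    have hmem : (a + min b 0)/2 ∈ Set.Ioo a b := ⟨by linarith, by linarith⟩
    have := (hs hmem).1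
    linarith
  · by_contra hlt
    push_neg at hlt
    have h1 : max a 1 < b := max_lt h hlt
    have i3 := le_max_left a 1
    have i4 := le_max_right a 1
    have hmem : (max a 1 + b)/2 ∈ Set.Ioo a b := ⟨by linarith, by linarith⟩
    have := (hs hmem).2
    linarith

lemma Ioo_disjoint_order {a b c d : ℝ} (hab : a < b) (hcd : c < d)
    (h : Disjoint (Set.Ioo a b) (Set.Ioo c d)) : b ≤ c ∨ d ≤ a := by
  by_contra hcon
  push_neg at hcon
  obtain ⟨h1, h2⟩ := hcon
  have hm : max a c < min b d := by
    simp only [max_lt_iff, lt_min_iff]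
    refine ⟨⟨hab, ?_⟩, ?_, hcd⟩ <;> first | exact h1 | exact h2 | (constructor <;> assumption)
  have hmem : (max a c + min b d)/2 ∈ Set.Ioo a b ∩ Set.Ioo c d := by
    have i1 := le_max_left a c
    have i2 := le_max_right a c
    have i3 := min_le_left b d
    have i4 := min_le_right b d
    exact ⟨⟨by linarith, by linarith⟩, ⟨by linarith, by linarith⟩⟩
  exact Set.disjoint_left.1 h hmem.1 hmem.2

lemma mem_closure_Ioo' {a b x : ℝ} (h : x ∈ closure (Set.Ioo a b)) : a ≤ x ∧ x ≤ b :=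
  (isClosed_Icc.closure_subset_iff.2 Set.Ioo_subset_Icc_self) h


lemma aux_part1 (ε : ℝ) (hε : 0 < ε) (hε' : ε < 1/20) :
    ∀ d : ConnDiv 3, d.Complete → EnvyFree (vEg3 ε) d →
      egal (vEg3 ε) d ≤ ENNReal.ofReal (1/3 + ε) := by
  intro d hc hef
  by_contra hle
  push_neg at hle
  have hv : ∀ i, ENNReal.ofReal (1/3 + ε) < vEg3 ε i (d.pieces i) :=
    fun i => hle.trans_le (iInf_le _ i)
  obtain ⟨a0, b0, hp0⟩ := d.isInterval 0
  obtain ⟨a1, b1, hp1⟩ := d.isInterval 1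
  obtain ⟨a2, b2, hp2⟩ := d.isInterval 2
  have hv0 : ENNReal.ofReal (1/3 + ε) < w1 ε (Set.Ioo a0 b0) := by
    have := hv 0; rwa [hp0, show vEg3 ε 0 = w1 ε from rfl] at this
  have hv1 : ENNReal.ofReal (1/3 + ε) < wU (Set.Ioo a1 b1) := by
    have := hv 1; rwa [hp1, show vEg3 ε 1 = wU from rfl] at this
  have hv2 : ENNReal.ofReal (1/3 + ε) < wU (Set.Ioo a2 b2) := by
    have := hv 2; rwa [hp2, show vEg3 ε 2 = wU from rfl] at this
  -- nonemptiness
  have h0 : a0 < b0 := by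
    by_contra h
    rw [Set.Ioo_eq_empty h, measure_empty] at hv0
    exact (by simp at hv0)
  have h1 : a1 < b1 := by
    by_contra h
    rw [Set.Ioo_eq_empty h, measure_empty] at hv1
    exact (by simp at hv1)
  have h2 : a2 < b2 := by
    by_contra h
    rw [Set.Ioo_eq_empty h, measure_empty] at hv2
    exact (by simp at hv2)
  obtain ⟨ha0, hb0⟩ := Ioo_bounds h0 (hp0 ▸ d.subset 0)
  obtain ⟨ha1, hb1⟩ := Ioo_bounds h1 (hp1 ▸ d.subset 1)
  obtain ⟨ha2, hb2⟩ := Ioo_bounds h2 (hp2 ▸ d.subset 2)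
  -- lengths
  have hl1 : 1/3 + ε < b1 - a1 := by
    by_contra h
    push_neg at h
    rw [wU_Ioo ha1 hb1] at hv1
    exact absurd (ENNReal.ofReal_le_ofReal h) (not_le.2 hv1)
  have hl2 : 1/3 + ε < b2 - a2 := by
    by_contra h
    push_neg at h
    rw [wU_Ioo ha2 hb2] at hv2
    exact absurd (ENNReal.ofReal_le_ofReal h) (not_le.2 hv2)
  -- disjointness orderings
  have hd01 := Ioo_disjoint_order h0 h1 (by rw [← hp0, ← hp1]; exact d.disj (by decide))
  have hd02 := Ioo_disjoint_order h0 h2 (by rw [← hp0, ← hp2]; exact d.disj (by decide))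
  have hd12 := Ioo_disjoint_order h1 h2 (by rw [← hp1, ← hp2]; exact d.disj (by decide))
  -- completeness at endpoints
  have hz : a0 ≤ 0 ∨ a1 ≤ 0 ∨ a2 ≤ 0 := by
    have hm := hc (by constructor <;> norm_num : (0:ℝ) ∈ Set.Icc 0 1)
    rw [Set.mem_iUnion] at hm
    obtain ⟨i, hi⟩ := hm
    fin_cases i
    · have hi' : (0:ℝ) ∈ closure (d.pieces 0) := hi
      rw [hp0] at hi'; exact Or.inl (mem_closure_Ioo' hi').1
    · have hi' : (0:ℝ) ∈ closure (d.pieces 1) := hi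
      rw [hp1] at hi'; exact Or.inr (Or.inl (mem_closure_Ioo' hi').1)
    · have hi' : (0:ℝ) ∈ closure (d.pieces 2) := hi
      rw [hp2] at hi'; exact Or.inr (Or.inr (mem_closure_Ioo' hi').1)
  have ho : 1 ≤ b0 ∨ 1 ≤ b1 ∨ 1 ≤ b2 := by
    have hm := hc (by constructor <;> norm_num : (1:ℝ) ∈ Set.Icc 0 1)
    rw [Set.mem_iUnion] at hm
    obtain ⟨i, hi⟩ := hm
    fin_cases i
    · have hi' : (1:ℝ) ∈ closure (d.pieces 0) := hi
      rw [hp0] at hi'; exact Or.inl (mem_closure_Ioo' hi').2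
    · have hi' : (1:ℝ) ∈ closure (d.pieces 1) := hi
      rw [hp1] at hi'; exact Or.inr (Or.inl (mem_closure_Ioo' hi').2)
    · have hi' : (1:ℝ) ∈ closure (d.pieces 2) := hi
      rw [hp2] at hi'; exact Or.inr (Or.inr (mem_closure_Ioo' hi').2)
  -- envy-freeness for player 0
  have he1 : w1 ε (Set.Ioo a1 b1) ≤ w1 ε (Set.Ioo a0 b0) := by
    have := hef 0 1; rwa [hp0, hp1, show vEg3 ε 0 = w1 ε from rfl] at this
  have he2 : w1 ε (Set.Ioo a2 b2) ≤ w1 ε (Set.Ioo a0 b0) := by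
    have := hef 0 2; rwa [hp0, hp2, show vEg3 ε 0 = w1 ε from rfl] at this
  rcases hd12 with h12 | h21
  · exact main_contra hε hε' h0 ha0 hb0 ha1 hb1 ha2 hb2 hl1 hl2 h12 hd01 hd02
      hz ho he1 he2 hv0
  · exact main_contra hε hε' h0 ha0 hb0 ha2 hb2 ha1 hb1 hl2 hl1 h21 hd02 hd01
      (by tauto) (by tauto) he2 he1 hv0

lemma aux_part2 (ε : ℝ) (hε : 0 < ε) (hε' : ε < 1/20) :
    (∃ y : ConnDiv 3,
      y.pieces 0 = Set.Ioo 0 ε ∧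
      y.pieces 1 = Set.Ioo ε (1/2) ∧
      y.pieces 2 = Set.Ioo (1/2) (1-ε) ∧
      EnvyFree (vEg3 ε) y ∧ ¬ y.Complete ∧
      egal (vEg3 ε) y = ENNReal.ofReal (1/2 - ε)) := by
  refine ⟨⟨![Set.Ioo 0 ε, Set.Ioo ε (1/2), Set.Ioo (1/2) (1-ε)], ?_, ?_, ?_⟩,
    rfl, rfl, rfl, ?_, ?_, ?_⟩
  · intro i; fin_cases i
    · exact ⟨0, ε, rfl⟩
    · exact ⟨ε, 1/2, rfl⟩
    · exact ⟨1/2, 1-ε, rfl⟩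
  · intro i; fin_cases i
    · intro x hx
      simp only [Matrix.cons_val_zero, Set.mem_Ioo] at hx
      exact ⟨by linarith [hx.1], by linarith [hx.2]⟩
    · intro x hx
      simp only [Matrix.cons_val_one, Matrix.head_cons, Set.mem_Ioo] at hx
      exact ⟨by linarith [hx.1], by linarith [hx.2]⟩
    · intro x hx
      have hx' : x ∈ Set.Ioo (1/2:ℝ) (1-ε) := hx
      exact ⟨by linarith [hx'.1], by linarith [hx'.2]⟩
  · intro i j hij
    fin_cases i <;> fin_cases j <;>
      first
      | exact absurd rfl hij
      | exact (disjoint_Ioo_of_le le_rfl :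
          Disjoint (Set.Ioo 0 ε) (Set.Ioo ε (1/2)))
      | exact (disjoint_Ioo_of_le (by linarith) :
          Disjoint (Set.Ioo 0 ε) (Set.Ioo (1/2) (1-ε)))
      | exact ((disjoint_Ioo_of_le le_rfl).symm :
          Disjoint (Set.Ioo ε (1/2)) (Set.Ioo 0 ε))
      | exact (disjoint_Ioo_of_le le_rfl :
          Disjoint (Set.Ioo ε (1/2)) (Set.Ioo (1/2) (1-ε)))
      | exact ((disjoint_Ioo_of_le (by linarith)).symm :
          Disjoint (Set.Ioo (1/2) (1-ε)) (Set.Ioo 0 ε))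
      | exact ((disjoint_Ioo_of_le le_rfl).symm :
          Disjoint (Set.Ioo (1/2) (1-ε)) (Set.Ioo ε (1/2)))
  · -- EnvyFree
    have hw0 : w1 ε (Set.Ioo 0 ε) = ENNReal.ofReal (1/2 - ε) := by
      rw [w1_apply, unifOn_full hε (by linarith) le_rfl,
        unifOn_zero _ (Ioo_inter_empty (by linarith)),
        unifOn_zero _ (Ioo_inter_empty (by linarith)), add_zero, add_zero]
    have hw1 : w1 ε (Set.Ioo ε (1/2)) = 0 := by
      rw [w1_apply, unifOn_zero _ (Ioo_inter_empty' le_rfl),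
        unifOn_zero _ (Ioo_inter_empty (by linarith)),
        unifOn_zero _ (Ioo_inter_empty (by linarith)), add_zero, add_zero]
    have hw2 : w1 ε (Set.Ioo (1/2) (1-ε)) = ENNReal.ofReal (3*ε) := by
      rw [w1_apply, unifOn_zero _ (Ioo_inter_empty' (by linarith)),
        unifOn_full (by linarith) (by linarith)
          (Set.Ioo_subset_Ioo (by linarith) (by linarith)),
        unifOn_zero _ (Ioo_inter_empty (by linarith)), zero_add, add_zero]
    have hu0 : wU (Set.Ioo 0 ε) = ENNReal.ofReal ε := by
      rw [wU_Ioo le_rfl (by linarith)]; norm_num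
    have hu1 : wU (Set.Ioo ε (1/2)) = ENNReal.ofReal (1/2 - ε) :=
      wU_Ioo (by linarith) (by norm_num)
    have hu2 : wU (Set.Ioo (1/2) (1-ε)) = ENNReal.ofReal (1/2 - ε) := by
      rw [wU_Ioo (by norm_num) (by linarith)]; ring_nf
    intro i j
    fin_cases i <;> fin_cases j
    · exact le_rfl
    · show w1 ε (Set.Ioo ε (1/2)) ≤ w1 ε (Set.Ioo 0 ε)
      rw [hw0, hw1]; exact zero_le
    · show w1 ε (Set.Ioo (1/2) (1-ε)) ≤ w1 ε (Set.Ioo 0 ε)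
      rw [hw0, hw2]; exact ENNReal.ofReal_le_ofReal (by linarith)
    · show wU (Set.Ioo 0 ε) ≤ wU (Set.Ioo ε (1/2))
      rw [hu0, hu1]; exact ENNReal.ofReal_le_ofReal (by linarith)
    · exact le_rfl
    · show wU (Set.Ioo (1/2) (1-ε)) ≤ wU (Set.Ioo ε (1/2))
      rw [hu1, hu2]
    · show wU (Set.Ioo 0 ε) ≤ wU (Set.Ioo (1/2) (1-ε))
      rw [hu0, hu2]; exact ENNReal.ofReal_le_ofReal (by linarith)
    · show wU (Set.Ioo ε (1/2)) ≤ wU (Set.Ioo (1/2) (1-ε))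
      rw [hu1, hu2]
    · exact le_rfl
  · -- not complete
    intro h
    have hm := h (⟨by linarith, by linarith⟩ : (1 - ε/2 : ℝ) ∈ Set.Icc 0 1)
    rw [Set.mem_iUnion] at hm
    obtain ⟨i, hi⟩ := hm
    have hcl : ∀ (a b : ℝ), (1 - ε/2 : ℝ) ∈ closure (Set.Ioo a b) → 1 - ε/2 ≤ b :=
      fun a b hx =>
        ((isClosed_Icc.closure_subset_iff.2 Set.Ioo_subset_Icc_self) hx).2
    fin_cases i
    · have := hcl _ _ hi; linarith
    · have := hcl _ _ hi; linarith
    · have := hcl _ _ hi; linarith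
  · -- egal
    have hval : ∀ i : Fin 3,
        vEg3 ε i (![Set.Ioo 0 ε, Set.Ioo ε (1/2), Set.Ioo (1/2) (1-ε)] i)
          = ENNReal.ofReal (1/2 - ε) := by
      intro i
      fin_cases i
      · show w1 ε (Set.Ioo 0 ε) = _
        rw [w1_apply, unifOn_full hε (by linarith) le_rfl,
          unifOn_zero _ (Ioo_inter_empty (by linarith)),
          unifOn_zero _ (Ioo_inter_empty (by linarith)), add_zero, add_zero]
      · show wU (Set.Ioo ε (1/2)) = _
        exact wU_Ioo (by linarith) (by norm_num)
      · show wU (Set.Ioo (1/2) (1-ε)) = _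
        rw [wU_Ioo (by norm_num) (by linarith)]; ring_nf
    calc egal (vEg3 ε) _ = ⨅ _ : Fin 3, ENNReal.ofReal (1/2 - ε) := iInf_congr hval
      _ = ENNReal.ofReal (1/2 - ε) := iInf_const

end AuxDumping

/-- For 3 players, every envy-free complete connected division has egalitarian
welfare at most `1/3 + ε`, while some envy-free partial connected division has
egalitarian welfare `1/2 - ε`; hence the 3-player egalitarian dumping paradox
gets arbitrarily close to `3/2`. -/
theorem egalitarian_dumping_three_players (ε : ℝ) (hε : 0 < ε) (hε' : ε < 1/20) :
    (∀ d : ConnDiv 3, d.Complete → EnvyFree (vEg3 ε) d →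
      egal (vEg3 ε) d ≤ ENNReal.ofReal (1/3 + ε)) ∧
    (∃ y : ConnDiv 3,
      y.pieces 0 = Set.Ioo 0 ε ∧
      y.pieces 1 = Set.Ioo ε (1/2) ∧
      y.pieces 2 = Set.Ioo (1/2) (1-ε) ∧
      EnvyFree (vEg3 ε) y ∧ ¬ y.Complete ∧
      egal (vEg3 ε) y = ENNReal.ofReal (1/2 - ε)) := by
  exact ⟨aux_part1 ε hε hε', aux_part2 ε hε hε'⟩
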